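/- Let n ≥ 1, 0 ≤ k < ℓ ≤ n, and let σ_m denote the m-th elementary symmetric polynomial on ℝⁿ. Then for every λ ∈ (0,∞)ⁿ and every i ∈ {1,...,n}, the partial derivative ∂/∂λᵢ of log σ_ℓ(λ) is strictly greater than the partial derivative ∂/∂λᵢ of log σ_k(λ); in particular, ∂/∂λᵢ (σ_ℓ(λ)/σ_k(λ)) > 0 on the positive cone. -/

import Mathlib

/-- The `m`-th elementary symmetric polynomial of `f` over the index set `s`. -/
def esymm {n : ℕ} (s : Finset (Fin n)) (m : ℕ) (f : Fin n → ℝ) : ℝ :=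
  ∑ t ∈ s.powersetCard m, ∏ i ∈ t, f i


lemma esymm_zero {n : ℕ} (s : Finset (Fin n)) (f : Fin n → ℝ) : esymm s 0 f = 1 := by
  simp [esymm]

lemma esymm_empty {n : ℕ} (m : ℕ) (f : Fin n → ℝ) : esymm (∅ : Finset (Fin n)) (m+1) f = 0 := by
  rw [esymm, Finset.powersetCard_eq_empty.2 (by simp), Finset.sum_empty]

lemma esymm_congr {n : ℕ} {s : Finset (Fin n)} {f g : Fin n → ℝ} (h : ∀ j ∈ s, f j = g j) (m : ℕ) :
    esymm s m f = esymm s m g := by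
  refine Finset.sum_congr rfl fun t ht => Finset.prod_congr rfl fun j hj => ?_
  exact h j ((Finset.mem_powersetCard.1 ht).1 hj)

lemma esymm_insert {n : ℕ} {s : Finset (Fin n)} {j : Fin n} (hj : j ∉ s) (m : ℕ) (f : Fin n → ℝ) :
    esymm (insert j s) (m+1) f = esymm s (m+1) f + f j * esymm s m f := by
  unfold esymm
  rw [Finset.powersetCard_succ_insert hj, Finset.sum_union, Finset.sum_image]
  · congr 1
    rw [Finset.mul_sum]
    refine Finset.sum_congr rfl fun t ht => ?_
    exact Finset.prod_insert (fun hjt => hj ((Finset.mem_powersetCard.1 ht).1 hjt))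
  · intro t ht t' ht' hE
    have h1 : j ∉ t := fun hjt => hj ((Finset.mem_powersetCard.1 ht).1 hjt)
    have h2 : j ∉ t' := fun hjt => hj ((Finset.mem_powersetCard.1 ht').1 hjt)
    rw [← Finset.erase_insert h1, ← Finset.erase_insert h2, hE]
  · rw [Finset.disjoint_right]
    rintro t ht ht'
    obtain ⟨u, hu, rfl⟩ := Finset.mem_image.1 ht
    have : j ∉ insert j u := fun h => hj ((Finset.mem_powersetCard.1 ht').1 h)
    exact this (Finset.mem_insert_self _ _)

lemma esymm_nonneg {n : ℕ} {s : Finset (Fin n)} {f : Fin n → ℝ} (hf : ∀ i, 0 ≤ f i) (m : ℕ) :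
    0 ≤ esymm s m f :=
  Finset.sum_nonneg fun t _ => Finset.prod_nonneg fun j _ => hf j

lemma esymm_pos {n : ℕ} {s : Finset (Fin n)} {f : Fin n → ℝ} (hf : ∀ i, 0 < f i) {m : ℕ}
    (hm : m ≤ s.card) : 0 < esymm s m f :=
  Finset.sum_pos (fun t _ => Finset.prod_pos fun j _ => hf j)
    (Finset.powersetCard_nonempty.2 hm)

lemma newton_weak {n : ℕ} {f : Fin n → ℝ} (hf : ∀ i, 0 < f i) (s : Finset (Fin n)) :
    ∀ a b : ℕ, a ≤ b → esymm s a f * esymm s (b+1) f ≤ esymm s (a+1) f * esymm s b f := by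
  induction s using Finset.cons_induction with
  | empty =>
    intro a b _
    match a with
    | 0 => simp [esymm_zero, esymm_empty]
    | a+1 => simp [esymm_empty]
  | cons j s hj ih =>
    intro a b hab
    rcases eq_or_lt_of_le hab with rfl | hlt
    · rw [mul_comm]
    obtain ⟨b', rfl⟩ : ∃ b', b = b'+1 := ⟨b-1, by omega⟩
    have ht := hf j
    rw [Finset.cons_eq_insert]
    have hnn : ∀ m, 0 ≤ esymm s m f := fun m => esymm_nonneg (fun i => (hf i).le) m
    match a with
    | 0 =>
      rw [esymm_zero, show b'+1+1 = (b'+1)+1 from rfl, esymm_insert hj, esymm_insert hj,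
        esymm_insert hj, esymm_zero]
      have h1 := ih 0 (b'+1) (by omega)
      have h2 := ih 0 b' (by omega)
      rw [esymm_zero] at h1 h2
      nlinarith [mul_le_mul_of_nonneg_left h2 ht.le, hnn b', hnn (b'+1),
        mul_nonneg (mul_nonneg ht.le (hnn (0+1))) (hnn b'),
        mul_nonneg (mul_nonneg ht.le ht.le) (hnn b')]
    | a'+1 =>
      rw [show a'+1+1 = (a'+1)+1 from rfl, show b'+1+1 = (b'+1)+1 from rfl,
        esymm_insert hj, esymm_insert hj, esymm_insert hj, esymm_insert hj]
      have h1 := ih (a'+1) (b'+1) (by omega)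
      have h2 := ih a' (b'+1) (by omega)
      have h3 := ih (a'+1) b' (by omega)
      have h4 := ih a' b' (by omega)
      nlinarith [mul_le_mul_of_nonneg_left h2 ht.le, mul_le_mul_of_nonneg_left h3 ht.le,
        mul_le_mul_of_nonneg_left h4 (mul_nonneg ht.le ht.le)]

lemma newton_strict {n : ℕ} {f : Fin n → ℝ} (hf : ∀ i, 0 < f i) (s : Finset (Fin n)) :
    ∀ a b : ℕ, a < b → b ≤ s.card →
      esymm s a f * esymm s (b+1) f < esymm s (a+1) f * esymm s b f := by
  induction s using Finset.cons_induction with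
  | empty => intro a b h1 h2; simp at h2; omega
  | cons j s hj ih =>
    intro a b hab hb
    obtain ⟨b', rfl⟩ : ∃ b', b = b'+1 := ⟨b-1, by omega⟩
    have hb' : b' ≤ s.card := by rw [Finset.card_cons] at hb; omega
    have ht := hf j
    rw [Finset.cons_eq_insert]
    have hnn : ∀ m, 0 ≤ esymm s m f := fun m => esymm_nonneg (fun i => (hf i).le) m
    match a with
    | 0 =>
      rw [esymm_zero, show b'+1+1 = (b'+1)+1 from rfl, esymm_insert hj, esymm_insert hj,
        esymm_insert hj, esymm_zero]
      have h1 := newton_weak hf s 0 (b'+1) (by omega)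
      have h2 := newton_weak hf s 0 b' (by omega)
      rw [esymm_zero] at h1 h2
      have hpos : 0 < esymm s b' f := esymm_pos hf hb'
      nlinarith [mul_le_mul_of_nonneg_left h2 ht.le, mul_pos (mul_pos ht ht) hpos,
        mul_nonneg (mul_nonneg ht.le (hnn (0+1))) (hnn b')]
    | a'+1 =>
      rw [show a'+1+1 = (a'+1)+1 from rfl, show b'+1+1 = (b'+1)+1 from rfl,
        esymm_insert hj, esymm_insert hj, esymm_insert hj, esymm_insert hj]
      have h1 := newton_weak hf s (a'+1) (b'+1) (by omega)
      have h2 := newton_weak hf s a' (b'+1) (by omega)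
      have h3 := newton_weak hf s (a'+1) b' (by omega)
      have h4 := ih a' b' (by omega) hb'
      nlinarith [mul_le_mul_of_nonneg_left h2 ht.le, mul_le_mul_of_nonneg_left h3 ht.le,
        mul_lt_mul_of_pos_left h4 (mul_pos ht ht)]

/-- Ellipticity of the Weingarten quotient: on the positive cone, for `k < ℓ`,
`∂ᵢ log σ_ℓ > ∂ᵢ log σ_k`; in particular `∂ᵢ (σ_ℓ/σ_k) > 0`. -/
theorem stmt_12 (n k ℓ : ℕ) (hn : 1 ≤ n) (hkℓ : k < ℓ) (hℓ : ℓ ≤ n)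
    (lam : Fin n → ℝ) (hlam : ∀ i, 0 < lam i) (i : Fin n) :
    deriv (fun s => Real.log (esymm Finset.univ k (Function.update lam i s))) (lam i) <
        deriv (fun s => Real.log (esymm Finset.univ ℓ (Function.update lam i s))) (lam i) ∧
      0 < deriv (fun s =>
          esymm Finset.univ ℓ (Function.update lam i s) /
            esymm Finset.univ k (Function.update lam i s)) (lam i) := by
  classical
  set u : Finset (Fin n) := Finset.univ.erase i with hu
  have hiu : i ∉ u := Finset.notMem_erase _ _
  have huniv : insert i u = Finset.univ := Finset.insert_erase (Finset.mem_univ i)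
  have hcard : u.card = n - 1 := by
    rw [hu, Finset.card_erase_of_mem (Finset.mem_univ i), Finset.card_univ, Fintype.card_fin]
  have hB : ∀ m, 0 ≤ esymm u m lam := fun m => esymm_nonneg (fun j => (hlam j).le) m
  have hdecomp : ∀ (m : ℕ) (x : ℝ), esymm Finset.univ (m+1) (Function.update lam i x)
      = esymm u (m+1) lam + x * esymm u m lam := by
    intro m x
    rw [← huniv, esymm_insert hiu, Function.update_self]
    congr 1
    · exact esymm_congr (fun j hjm =>
        Function.update_of_ne (Finset.ne_of_mem_erase hjm) _ _) _
    · congr 1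
      exact esymm_congr (fun j hjm =>
        Function.update_of_ne (Finset.ne_of_mem_erase hjm) _ _) _
  have hg : ∀ m : ℕ, HasDerivAt (fun x => esymm Finset.univ (m+1) (Function.update lam i x))
      (esymm u m lam) (lam i) := by
    intro m
    have he : (fun x => esymm Finset.univ (m+1) (Function.update lam i x))
        = fun x => esymm u (m+1) lam + x * esymm u m lam := funext fun x => hdecomp m x
    rw [he]
    simpa using ((hasDerivAt_id (lam i)).mul_const (esymm u m lam)).const_add
      (esymm u (m+1) lam)
  have hσ : ∀ m, m ≤ n → 0 < esymm Finset.univ m lam := fun m hm =>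
    esymm_pos hlam (by simpa [Finset.card_univ] using hm)
  obtain ⟨l', rfl⟩ : ∃ l', ℓ = l'+1 := ⟨ℓ-1, by omega⟩
  have hl'u : l' ≤ u.card := by omega
  -- derivative data for numerator (index ℓ)
  have hσℓ : 0 < esymm Finset.univ (l'+1) lam := hσ _ hℓ
  have hσk : 0 < esymm Finset.univ k lam := hσ _ (by omega)
  have hvalℓ : esymm Finset.univ (l'+1) (Function.update lam i (lam i))
      = esymm Finset.univ (l'+1) lam := by rw [Function.update_eq_self]
  have hvalk : esymm Finset.univ k (Function.update lam i (lam i))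
      = esymm Finset.univ k lam := by rw [Function.update_eq_self]
  -- B_k : the derivative of the k-th function
  obtain ⟨Bk, hBk, key⟩ : ∃ Bk : ℝ,
      HasDerivAt (fun x => esymm Finset.univ k (Function.update lam i x)) Bk (lam i) ∧
      Bk * esymm Finset.univ (l'+1) lam < esymm u l' lam * esymm Finset.univ k lam := by
    match k, hkℓ with
    | 0, _ =>
      refine ⟨0, ?_, ?_⟩
      · have he : (fun x => esymm Finset.univ 0 (Function.update lam i x))
            = fun _ => (1:ℝ) := funext fun x => esymm_zero _ _
        rw [he]; exact hasDerivAt_const _ _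
      · rw [zero_mul, esymm_zero, mul_one]
        exact esymm_pos hlam hl'u
    | k'+1, hkℓ =>
      refine ⟨esymm u k' lam, hg k', ?_⟩
      have hstrict := newton_strict hlam u k' l' (by omega) hl'u
      have hd1 : esymm Finset.univ (l'+1) lam = esymm u (l'+1) lam + lam i * esymm u l' lam := by
        rw [← hdecomp l' (lam i), Function.update_eq_self]
      have hd2 : esymm Finset.univ (k'+1) lam = esymm u (k'+1) lam + lam i * esymm u k' lam := by
        rw [← hdecomp k' (lam i), Function.update_eq_self]
      rw [hd1, hd2]
      nlinarith [hlam i]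
  have hBℓ := hg l'
  -- first part
  have hlogk := (hBk.log (by rw [hvalk]; exact hσk.ne')).deriv
  have hlogℓ := (hBℓ.log (by rw [hvalℓ]; exact hσℓ.ne')).deriv
  have hdiv := ((hBℓ.div hBk (by rw [hvalk]; exact hσk.ne')).deriv)
  rw [hvalk] at hlogk hdiv
  rw [hvalℓ] at hlogℓ hdiv
  constructor
  · rw [hlogk, hlogℓ]
    rw [div_lt_div_iff₀ hσk hσℓ]
    exact key
  · rw [show (fun s => esymm Finset.univ (l'+1) (Function.update lam i s) / esymm Finset.univ k (Function.update lam i s)) = ((fun x => esymm Finset.univ (l'+1) (Function.update lam i x)) / fun x => esymm Finset.univ k (Function.update lam i x)) from rfl, hdiv]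
    apply div_pos
    · nlinarith
    · positivity
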